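/- Let S, S̃ be subspaces of ℝ^n of equal dimension. Then sign(S) ∩ sign(S̃⊥) = {0} if and only if sign(S̃) ∩ sign(S⊥) = {0}. -/

import Mathlib

open scoped BigOperators

noncomputable section

/-- The generalized exponential map `F_c(x) = ∑ i, c_i exp(w̃^i · x) w^i`. -/
def Fmap {d dt n : ℕ} (W : Matrix (Fin d) (Fin n) ℝ) (Wt : Matrix (Fin dt) (Fin n) ℝ)
    (c : Fin n → ℝ) (x : Fin dt → ℝ) : Fin d → ℝ :=
  fun i => ∑ j, c j * Real.exp (∑ k, Wt k j * x k) * W i j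

/-- The polyhedral cone generated by the columns of `W`. -/
def coneOf {d n : ℕ} (W : Matrix (Fin d) (Fin n) ℝ) : Set (Fin d → ℝ) :=
  {y | ∃ u : Fin n → ℝ, (∀ j, 0 ≤ u j) ∧ y = fun i => ∑ j, u j * W i j}

/-- The componentwise sign vector. -/
def signVec {n : ℕ} (x : Fin n → ℝ) : Fin n → SignType := fun i => SignType.sign (x i)

/-- The set of sign vectors of a set of real vectors. -/
def signSet {n : ℕ} (T : Set (Fin n → ℝ)) : Set (Fin n → SignType) := signVec '' T

/-- The kernel of (the linear map given by) a matrix, as a set. -/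
def kerSet {d n : ℕ} (W : Matrix (Fin d) (Fin n) ℝ) : Set (Fin n → ℝ) :=
  {x | W.mulVec x = 0}

/-- The orthogonal complement (w.r.t. the standard inner product) of a set in `ℝ^n`. -/
def orthSet {n : ℕ} (T : Set (Fin n → ℝ)) : Set (Fin n → ℝ) :=
  {v | ∀ u ∈ T, ∑ i, u i * v i = 0}

/- ### Auxiliary material -/

open Module

namespace Stmt4Aux

variable {n : ℕ}

lemma signVec_zero : signVec (0 : Fin n → ℝ) = 0 := by
  funext i; simp [signVec]

lemma signVec_eq_zero_iff {x : Fin n → ℝ} : signVec x = 0 ↔ x = 0 := by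
  constructor
  · intro h; funext i
    have := congrFun h i
    simpa [signVec, sign_eq_zero_iff] using this
  · rintro rfl; exact signVec_zero

/-- Two vectors have the same sign vector iff one is a positive diagonal scaling
of the other. -/
lemma signVec_eq_iff (x v : Fin n → ℝ) :
    signVec x = signVec v ↔ ∃ d : Fin n → ℝ, (∀ i, 0 < d i) ∧ ∀ i, v i = d i * x i := by
  constructor
  · intro h
    refine ⟨fun i => if x i = 0 then 1 else v i / x i, ?_, ?_⟩
    · intro i
      by_cases hxi : x i = 0
      · simp [hxi]
      · have hs : SignType.sign (x i) = SignType.sign (v i) := congrFun h i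
        simp only [hxi, if_false]
        rcases lt_trichotomy (x i) 0 with hlt | heq | hgt
        · have h1 : SignType.sign (v i) = -1 := by rw [← hs]; exact sign_neg hlt
          have hv : v i < 0 := by rwa [sign_eq_neg_one_iff] at h1
          exact div_pos_of_neg_of_neg hv hlt
        · exact absurd heq hxi
        · have h1 : SignType.sign (v i) = 1 := by rw [← hs]; exact sign_pos hgt
          have hv : 0 < v i := by rwa [sign_eq_one_iff] at h1
          exact div_pos hv hgt
    · intro i
      by_cases hxi : x i = 0
      · have hs : SignType.sign (v i) = SignType.sign (x i) := (congrFun h i).symm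
        rw [hxi, sign_zero, sign_eq_zero_iff] at hs
        simp [hs, hxi]
      · simp [hxi, div_mul_cancel₀ _ hxi]
  · rintro ⟨d, hd, hv⟩
    funext i
    show SignType.sign (x i) = SignType.sign (v i)
    rw [hv i, sign_mul, sign_pos (hd i), one_mul]

/-- The canonical linear identification of `EuclideanSpace ℝ (Fin n)` with `Fin n → ℝ`. -/
abbrev ee (n : ℕ) : EuclideanSpace ℝ (Fin n) ≃ₗ[ℝ] (Fin n → ℝ) :=
  WithLp.linearEquiv 2 ℝ (Fin n → ℝ)

lemma inner_eq (y z : EuclideanSpace ℝ (Fin n)) :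
    (inner ℝ y z : ℝ) = ∑ i, (ee n y) i * (ee n z) i := by
  simp [PiLp.inner_apply, RCLike.inner_apply, conj_trivial, mul_comm]

/-- Transport of a submodule of `Fin n → ℝ` to `EuclideanSpace ℝ (Fin n)`. -/
def hatS (U : Submodule ℝ (Fin n → ℝ)) : Submodule ℝ (EuclideanSpace ℝ (Fin n)) :=
  U.comap (ee n).toLinearMap

lemma mem_hatS {U : Submodule ℝ (Fin n → ℝ)} {y : EuclideanSpace ℝ (Fin n)} :
    y ∈ hatS U ↔ ee n y ∈ U := Iff.rfl

lemma finrank_hatS (U : Submodule ℝ (Fin n → ℝ)) :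
    finrank ℝ (hatS U) = finrank ℝ U := by
  rw [hatS, Submodule.comap_equiv_eq_map_symm]
  exact LinearEquiv.finrank_map_eq _ _

/-- Membership in `orthSet ↑U` corresponds to membership in the orthogonal complement. -/
lemma mem_orth_iff (U : Submodule ℝ (Fin n → ℝ)) (y : EuclideanSpace ℝ (Fin n)) :
    ee n y ∈ orthSet (U : Set (Fin n → ℝ)) ↔ y ∈ (hatS U)ᗮ := by
  rw [Submodule.mem_orthogonal]
  constructor
  · intro h u hu
    rw [inner_eq]
    exact h (ee n u) hu
  · intro h w hw
    have := h ((ee n).symm w) (by simpa [mem_hatS] using hw)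
    rwa [inner_eq, LinearEquiv.apply_symm_apply] at this

/-- Dimension-splitting duality: for subspaces of total dimension `n`,
trivial intersection passes to orthogonal complements. -/
lemma dimswap (A B : Submodule ℝ (EuclideanSpace ℝ (Fin n)))
    (hAB : finrank ℝ A + finrank ℝ B = n) :
    A ⊓ B = ⊥ ↔ Aᗮ ⊓ Bᗮ = ⊥ := by
  have key : ∀ A B : Submodule ℝ (EuclideanSpace ℝ (Fin n)),
      finrank ℝ A + finrank ℝ B = n → A ⊓ B = ⊥ → Aᗮ ⊓ Bᗮ = ⊥ := by
    intro A B hAB h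
    have hsum := Submodule.finrank_sup_add_finrank_inf_eq A B
    rw [h, finrank_bot] at hsum
    have htop : A ⊔ B = ⊤ := by
      apply Submodule.eq_top_of_finrank_eq
      rw [finrank_euclideanSpace_fin]
      omega
    rw [Submodule.inf_orthogonal, htop, Submodule.top_orthogonal_eq_bot]
  constructor
  · exact key A B hAB
  · intro h
    have ha := Submodule.finrank_add_finrank_orthogonal A
    have hb := Submodule.finrank_add_finrank_orthogonal B
    rw [finrank_euclideanSpace_fin] at ha hb
    have := key Aᗮ Bᗮ (by omega) h
    rwa [Submodule.orthogonal_orthogonal, Submodule.orthogonal_orthogonal] at this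

/-- The diagonal linear automorphism of `Fin n → ℝ` given by a nonvanishing `d`. -/
def diagE (d : Fin n → ℝ) (hd : ∀ i, d i ≠ 0) : (Fin n → ℝ) ≃ₗ[ℝ] (Fin n → ℝ) where
  toFun x := fun i => d i * x i
  invFun x := fun i => (d i)⁻¹ * x i
  map_add' x y := by funext i; simp [mul_add]
  map_smul' c x := by funext i; simp [smul_eq_mul]; ring
  left_inv x := by funext i; exact inv_mul_cancel_left₀ (hd i) (x i)
  right_inv x := by funext i; exact mul_inv_cancel_left₀ (hd i) (x i)

/-- The key asymmetric implication. -/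
lemma key {n : ℕ} (U V : Submodule ℝ (Fin n → ℝ))
    (hdim : finrank ℝ U = finrank ℝ V)
    (h : ∃ x v : Fin n → ℝ, x ∈ U ∧ v ∈ orthSet (V : Set (Fin n → ℝ)) ∧
        signVec x = signVec v ∧ x ≠ 0) :
    ∃ x v : Fin n → ℝ, x ∈ V ∧ v ∈ orthSet (U : Set (Fin n → ℝ)) ∧
        signVec x = signVec v ∧ x ≠ 0 := by
  obtain ⟨x, v, hxU, hvV, hsgn, hx0⟩ := h
  obtain ⟨d, hd, hvd⟩ := (signVec_eq_iff x v).mp hsgn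
  have hd0 : ∀ i, d i ≠ 0 := fun i => (hd i).ne'
  set D : (Fin n → ℝ) ≃ₗ[ℝ] (Fin n → ℝ) := diagE d hd0 with hD
  -- the transported diagonal automorphism
  set Dh : EuclideanSpace ℝ (Fin n) ≃ₗ[ℝ] EuclideanSpace ℝ (Fin n) :=
    (ee n).trans (D.trans (ee n).symm) with hDh
  set A : Submodule ℝ (EuclideanSpace ℝ (Fin n)) := (hatS U).map Dh.toLinearMap with hA
  -- v is a nonzero element of A ⊓ (hatS V)ᗮ
  have hvD : v = D x := by funext i; exact hvd i
  have hv0 : v ≠ 0 := by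
    intro h0
    apply hx0
    have : D x = D 0 := by rw [← hvD, h0, map_zero]
    exact D.injective this
  have hyA : (ee n).symm v ∈ A := by
    refine ⟨(ee n).symm x, ?_, ?_⟩
    · simp [mem_hatS]
      exact hxU
    · simp [hDh, hvD]
  have hyB : (ee n).symm v ∈ (hatS V)ᗮ := by
    rw [← mem_orth_iff]
    rwa [LinearEquiv.apply_symm_apply]
  have hne : A ⊓ (hatS V)ᗮ ≠ ⊥ := by
    intro hbot
    have : (ee n).symm v ∈ (⊥ : Submodule ℝ (EuclideanSpace ℝ (Fin n))) := by
      rw [← hbot]; exact ⟨hyA, hyB⟩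
    rw [Submodule.mem_bot] at this
    exact hv0 (by simpa using congrArg (ee n) this)
  -- dimension count
  have hdimA : finrank ℝ A = finrank ℝ V := by
    rw [hA, LinearEquiv.finrank_map_eq, finrank_hatS, hdim]
  have hVo := Submodule.finrank_add_finrank_orthogonal (hatS V)
  rw [finrank_euclideanSpace_fin, finrank_hatS] at hVo
  have hsum : finrank ℝ A + finrank ℝ (hatS V)ᗮ = n := by omega
  -- dual intersection
  have hne2 : Aᗮ ⊓ hatS V ≠ ⊥ := by
    intro hbot
    apply hne
    rw [dimswap A (hatS V)ᗮ hsum, Submodule.orthogonal_orthogonal]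
    exact hbot
  obtain ⟨z, hz, hz0⟩ := Submodule.exists_mem_ne_zero_of_ne_bot hne2
  obtain ⟨hzA, hzV⟩ := hz
  refine ⟨ee n z, fun i => d i * (ee n z) i, hzV, ?_, ?_, ?_⟩
  · -- d • z ∈ orthSet U
    intro u hu
    have huA : Dh ((ee n).symm u) ∈ A := ⟨(ee n).symm u, by simpa [mem_hatS] using hu, rfl⟩
    have := (Submodule.mem_orthogonal _ _).mp hzA _ huA
    rw [inner_eq] at this
    have heq : ∀ i, (ee n (Dh ((ee n).symm u))) i = d i * u i := by
      intro i; simp [hDh, hD, diagE]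
    calc ∑ i, u i * (d i * (ee n z) i)
        = ∑ i, (ee n (Dh ((ee n).symm u))) i * (ee n z) i := by
          apply Finset.sum_congr rfl; intro i _; rw [heq i]; ring
      _ = 0 := this
  · rw [signVec_eq_iff]
    exact ⟨d, hd, fun i => rfl⟩
  · intro h0
    exact hz0 (by simpa using congrArg (ee n).symm h0)

end Stmt4Aux

open Stmt4Aux in
theorem stmt4 {n : ℕ} (S St : Submodule ℝ (Fin n → ℝ))
    (hdim : Module.finrank ℝ S = Module.finrank ℝ St) :
    signSet (S : Set (Fin n → ℝ)) ∩ signSet (orthSet (St : Set (Fin n → ℝ))) = {0} ↔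
    signSet (St : Set (Fin n → ℝ)) ∩ signSet (orthSet (S : Set (Fin n → ℝ))) = {0} := by
  have L1 : ∀ U V : Submodule ℝ (Fin n → ℝ),
      (signSet (U : Set (Fin n → ℝ)) ∩ signSet (orthSet (V : Set (Fin n → ℝ))) = {0} ↔
        ¬ ∃ x v : Fin n → ℝ, x ∈ U ∧ v ∈ orthSet (V : Set (Fin n → ℝ)) ∧
            signVec x = signVec v ∧ x ≠ 0) := by
    intro U V
    constructor
    · rintro h ⟨x, v, hx, hv, hs, hx0⟩
      have hmem : signVec x ∈ signSet (U : Set (Fin n → ℝ)) ∩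
          signSet (orthSet (V : Set (Fin n → ℝ))) :=
        ⟨⟨x, hx, rfl⟩, ⟨v, hv, hs.symm⟩⟩
      rw [h, Set.mem_singleton_iff] at hmem
      exact hx0 (signVec_eq_zero_iff.mp hmem)
    · intro h
      ext σ
      simp only [Set.mem_inter_iff, Set.mem_singleton_iff]
      constructor
      · rintro ⟨⟨x, hx, rfl⟩, ⟨v, hv, hveq⟩⟩
        by_cases hx0 : x = 0
        · rw [hx0]; exact signVec_zero
        · exact absurd ⟨x, v, hx, hv, hveq.symm, hx0⟩ h
      · rintro rfl
        refine ⟨⟨0, U.zero_mem, signVec_zero⟩, ⟨0, ?_, signVec_zero⟩⟩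
        intro u _; simp
  rw [L1 S St, L1 St S]
  exact not_congr ⟨key S St hdim, key St S hdim.symm⟩

end
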